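/- Let X be a finite set with |X| ≥ 2, f : X → X a bijection, and k a field. Let A = k[S(X,r_f)] be the Yang–Baxter algebra of the permutation idempotent solution (X,r_f), and for each m ≥ 0 let A_m ⊆ A be the k-span of the classes [w] of words w of length m. Then the only k-linear map D : A → A satisfying D(ab) = D(a)b + aD(b) for all a, b ∈ A and D(A_m) ⊆ A_{m−1} for every m ≥ 1 (a derivation lowering the degree by 1) is the zero map. -/

import Mathlib

/-- The permutation idempotent solution `r_f (x, y) = (f y, y)` attached to a map
`f : X → X`. -/
def rPerm {X : Type*} (f : X → X) : X × X → X × X := fun p => (f p.2, p.2)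

/-- The defining relations of the Yang–Baxter monoid: `xy ~ x'y'` whenever
`r (x, y) = (x', y')`. -/
def ybRel {X : Type*} (r : X × X → X × X) : FreeMonoid X → FreeMonoid X → Prop :=
  fun a b => ∃ x y : X,
    a = FreeMonoid.of x * FreeMonoid.of y ∧
    b = FreeMonoid.of (r (x, y)).1 * FreeMonoid.of (r (x, y)).2

/-- The congruence on the free monoid on `X` generated by the Yang–Baxter relations;
the Yang–Baxter monoid `S(X, r)` is its quotient. -/
def ybCon {X : Type*} (r : X × X → X × X) : Con (FreeMonoid X) := conGen (ybRel r)

/-- The degree-`m` component of the Yang–Baxter algebra: the `k`-span of the classes of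
words of length `m`. -/
noncomputable def degComp (k : Type*) [Field k] {X : Type*} (c : Con (FreeMonoid X)) (m : ℕ) :
    Submodule k (MonoidAlgebra k c.Quotient) :=
  Submodule.span k
    {a | ∃ w : FreeMonoid X, w.length = m ∧ a = MonoidAlgebra.of k c.Quotient (c.mk' w)}


def LastM (X : Type*) := Option X

instance LastM.monoid {X : Type*} : Monoid (LastM X) where
  mul a b := Option.casesOn b a some
  one := (none : Option X)
  mul_assoc a b c := by cases c <;> cases b <;> rfl
  one_mul a := by cases a <;> rfl
  mul_one a := rfl

def lastHom {X : Type*} : FreeMonoid X →* LastM X :=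
  FreeMonoid.lift (fun x => (some x : LastM X))


private lemma ybLetterInj {X : Type*} (f : X → X) (x y : X)
    (h : (ybCon (rPerm f)).mk' (FreeMonoid.of x) = (ybCon (rPerm f)).mk' (FreeMonoid.of y)) :
    x = y := by
  have hc : ybCon (rPerm f) (FreeMonoid.of x) (FreeMonoid.of y) := by
    rw [Con.coe_mk'] at h
    rwa [Con.eq] at h
  have hle : ybCon (rPerm f) ≤ Con.ker lastHom := by
    apply Con.conGen_le.mpr
    rintro a b ⟨u, v, rfl, rfl⟩
    show lastHom _ = lastHom _
    simp only [lastHom, map_mul, FreeMonoid.lift_eval_of]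
    rfl
  have h1 : lastHom (FreeMonoid.of x) = lastHom (FreeMonoid.of y) := hle hc
  simp only [lastHom, FreeMonoid.lift_eval_of] at h1
  exact Option.some.inj h1

private lemma coeffAux1 {k : Type*} [Field k] {G : Type*} {u v : G} (hne : v ≠ u)
    {p q r s : k}
    (h : p • MonoidAlgebra.single u (1 : k) + q • MonoidAlgebra.single v 1
       = r • MonoidAlgebra.single u 1 + s • MonoidAlgebra.single u 1) : q = 0 := by
  classical
  have h' := congrArg (fun z => MonoidAlgebra.coeff z v) h
  simpa [MonoidAlgebra.coeff_add, MonoidAlgebra.coeff_smul_apply, MonoidAlgebra.coeff_single,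
    Finsupp.single_apply, hne, Ne.symm hne] using h'

private lemma coeffAux2 {k : Type*} [Field k] {G : Type*} {u v : G} (hne : v ≠ u)
    {p q r s : k}
    (h : p • MonoidAlgebra.single u (1 : k) + q • MonoidAlgebra.single u 1
       = r • MonoidAlgebra.single u 1 + s • MonoidAlgebra.single v 1) : s = 0 := by
  classical
  have h' := congrArg (fun z => MonoidAlgebra.coeff z v) h
  simpa [MonoidAlgebra.coeff_add, MonoidAlgebra.coeff_smul_apply, MonoidAlgebra.coeff_single,
    Finsupp.single_apply, hne, Ne.symm hne] using h'.symm

theorem stmt11 {X : Type*} [Finite X] (hX : 2 ≤ Nat.card X)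
    (f : X → X) (hf : Function.Bijective f)
    (k : Type*) [Field k]
    (D : MonoidAlgebra k (ybCon (rPerm f)).Quotient →ₗ[k]
         MonoidAlgebra k (ybCon (rPerm f)).Quotient)
    (hleib : ∀ a b, D (a * b) = D a * b + a * D b)
    (hdeg : ∀ m : ℕ, 1 ≤ m → ∀ a ∈ degComp k (ybCon (rPerm f)) m,
      D a ∈ degComp k (ybCon (rPerm f)) (m - 1)) :
    D = 0 := by
  classical
  let E : X → MonoidAlgebra k (ybCon (rPerm f)).Quotient := fun z =>
    MonoidAlgebra.of k (ybCon (rPerm f)).Quotient ((ybCon (rPerm f)).mk' (FreeMonoid.of z))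
  have hinj : ∀ x y : X,
      (ybCon (rPerm f)).mk' (FreeMonoid.of x) = (ybCon (rPerm f)).mk' (FreeMonoid.of y) →
      x = y := fun x y h => ybLetterInj f x y h
  -- the defining relation in the algebra
  have hrel : ∀ x y : X, E x * E y = E (f y) * E y := by
    intro x y
    have hq : (ybCon (rPerm f)).mk' (FreeMonoid.of x * FreeMonoid.of y)
        = (ybCon (rPerm f)).mk' (FreeMonoid.of (f y) * FreeMonoid.of y) := by
      rw [Con.coe_mk']
      exact (Con.eq _).mpr (ConGen.Rel.of _ _ ⟨x, y, rfl, rfl⟩)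
    have h2 := congrArg (MonoidAlgebra.of k (ybCon (rPerm f)).Quotient) hq
    simp only [map_mul] at h2
    exact h2
  -- degree-0 component is the span of 1
  have hdeg0 : degComp k (ybCon (rPerm f)) 0
      ≤ Submodule.span k {(1 : MonoidAlgebra k (ybCon (rPerm f)).Quotient)} := by
    rw [degComp, Submodule.span_le]
    rintro a ⟨w, hw, rfl⟩
    have hw1 : w = 1 := FreeMonoid.length_eq_zero.mp hw
    subst hw1
    simp only [map_one]
    exact Submodule.subset_span rfl
  have hE1 : ∀ x, E x ∈ degComp k (ybCon (rPerm f)) 1 :=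
    fun x => Submodule.subset_span ⟨FreeMonoid.of x, rfl, rfl⟩
  have hDx : ∀ x, ∃ cx : k, D (E x) = cx • 1 := by
    intro x
    have h0 := hdeg0 (hdeg 1 le_rfl (E x) (hE1 x))
    obtain ⟨cx, hcx⟩ := Submodule.mem_span_singleton.mp h0
    exact ⟨cx, hcx.symm⟩
  choose cf hcf using hDx
  -- the key equation
  have hkey : ∀ x y : X, cf x • E y + cf y • E x = cf (f y) • E y + cf y • E (f y) := by
    intro x y
    have h1 := hleib (E x) (E y)
    have h2 := hleib (E (f y)) (E y)
    rw [hrel x y] at h1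
    have h3 := h1.symm.trans h2
    rw [hcf x, hcf y, hcf (f y)] at h3
    simpa [smul_mul_assoc, mul_smul_comm] using h3
  -- all coefficients vanish
  have hcf0 : ∀ y : X, cf y = 0 := by
    intro y
    by_cases hfy : f y = y
    · -- pick x ≠ y, use coefficient at [x]
      have : Nontrivial X := Finite.one_lt_card_iff_nontrivial.mp (by omega)
      obtain ⟨x, hx⟩ := exists_ne y
      have h := hkey x y
      rw [hfy] at h
      simp only [E, MonoidAlgebra.of_apply] at h
      exact coeffAux1 (fun hh => hx (hinj x y hh)) h
    · -- take x = y, use coefficient at [f y]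
      have h := hkey y y
      simp only [E, MonoidAlgebra.of_apply] at h
      exact coeffAux2 (fun hh => hfy (hinj (f y) y hh)) h
  have hDE : ∀ x : X, D (E x) = 0 := by
    intro x; rw [hcf x, hcf0 x, zero_smul]
  have hD1 : D 1 = 0 := by
    have h := hleib 1 1
    simp only [mul_one, one_mul] at h
    have h2 : D 1 + 0 = D 1 + D 1 := by rw [add_zero]; exact h
    exact (add_left_cancel h2).symm
  have hword : ∀ w : FreeMonoid X,
      D (MonoidAlgebra.of k (ybCon (rPerm f)).Quotient ((ybCon (rPerm f)).mk' w)) = 0 := by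
    intro w
    induction w using FreeMonoid.recOn with
    | one => simpa [map_one] using hD1
    | of_mul x xs ih =>
      have hsplit : MonoidAlgebra.of k (ybCon (rPerm f)).Quotient
            ((ybCon (rPerm f)).mk' (FreeMonoid.of x * xs))
          = E x * MonoidAlgebra.of k (ybCon (rPerm f)).Quotient ((ybCon (rPerm f)).mk' xs) := by
        rw [map_mul, map_mul]
      rw [hsplit, hleib, hDE, ih, zero_mul, mul_zero, add_zero]
  apply LinearMap.ext
  intro a
  rw [LinearMap.zero_apply]
  induction a using MonoidAlgebra.induction with
  | zero => simp
  | single_add g b rest _ _ ihrest =>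
    rw [map_add, ihrest, add_zero]
    obtain ⟨w, rfl⟩ := (ybCon (rPerm f)).mk'_surjective g
    have hsingle : (MonoidAlgebra.single ((ybCon (rPerm f)).mk' w) b :
          MonoidAlgebra k (ybCon (rPerm f)).Quotient)
        = b • MonoidAlgebra.of k (ybCon (rPerm f)).Quotient ((ybCon (rPerm f)).mk' w) := by
      rw [MonoidAlgebra.of_apply, MonoidAlgebra.smul_single', mul_one]
    rw [hsingle, map_smul, hword, smul_zero]
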